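/- (Abstract backward estimate by induction on scales.) Let f : [−3/4, 0] → [0, ∞) be continuous, let C > 0, and suppose f has the property: for every r > 0 and every s ∈ [−1/2 + 2r², 0], if f(t) ≤ 2r⁻² for all t ∈ [s − r², s], then f is differentiable on [s − r²/2, s] with |f′(t)| ≤ C r⁻³ there. Assume also sup f < ∞. Then there exists ε > 0 depending only on C such that: for every r ≤ ε and every s ∈ [−1/2 + 2r², 0], if f(s) ≤ r⁻², then f(t) ≤ 2r⁻² for all t ∈ [s − r², s]. -/

import Mathlib

set_option maxHeartbeats 1000000


/-- abstract backward estimate by induction on scales: let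
`f : [−3/4, 0] → [0, ∞)` be continuous and bounded, `C > 0`, and suppose that
whenever `f ≤ 2 r⁻²` on `[s − r², s]` (with `s ∈ [−1/2 + 2r², 0]`), `f` is
differentiable with `|f′| ≤ C r⁻³` on `[s − r²/2, s]`.  Then there exists
`ε > 0` depending only on `C` such that for every `r ≤ ε` and every
`s ∈ [−1/2 + 2r², 0]`, `f(s) ≤ r⁻²` implies `f ≤ 2 r⁻²` on `[s − r², s]`. -/
theorem backward_estimate_dyadic_induction (C : ℝ) (hC : 0 < C) :
    ∃ ε > (0 : ℝ), ∀ f : ℝ → ℝ,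
      ContinuousOn f (Set.Icc (-(3 / 4) : ℝ) 0) →
      (∀ t ∈ Set.Icc (-(3 / 4) : ℝ) 0, 0 ≤ f t) →
      (∃ B : ℝ, ∀ t ∈ Set.Icc (-(3 / 4) : ℝ) 0, f t ≤ B) →
      (∀ r : ℝ, 0 < r → ∀ s ∈ Set.Icc (-(1 / 2) + 2 * r ^ 2 : ℝ) 0,
        (∀ t ∈ Set.Icc (s - r ^ 2) s, f t ≤ 2 / r ^ 2) →
        ∀ t ∈ Set.Icc (s - r ^ 2 / 2) s,
          DifferentiableAt ℝ f t ∧ |deriv f t| ≤ C / r ^ 3) →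
      ∀ r : ℝ, 0 < r → r ≤ ε →
        ∀ s ∈ Set.Icc (-(1 / 2) + 2 * r ^ 2 : ℝ) 0,
          f s ≤ 1 / r ^ 2 → ∀ t ∈ Set.Icc (s - r ^ 2) s, f t ≤ 2 / r ^ 2 := by
  refine ⟨1 / (9 * C), by positivity, ?_⟩
  intro f hcont hpos hbdd hder r hr hrε s hs hfs
  obtain ⟨B, hB⟩ := hbdd
  -- the claim at scale r
  set Claim : ℝ → Prop := fun r =>
    ∀ s ∈ Set.Icc (-(1 / 2) + 2 * r ^ 2 : ℝ) 0,
      f s ≤ 1 / r ^ 2 → ∀ t ∈ Set.Icc (s - r ^ 2) s, f t ≤ 2 / r ^ 2 with hClaim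
  -- base case: at very small scales the claim is trivial from boundedness
  set δ : ℝ := Real.sqrt (2 / max B 1) with hδ
  have hδpos : 0 < δ := Real.sqrt_pos.mpr (by positivity)
  have base : ∀ ρ : ℝ, 0 < ρ → ρ ≤ δ → Claim ρ := by
    intro ρ hρ hρδ s' hs' _ t ht
    have hdom : t ∈ Set.Icc (-(3 / 4) : ℝ) 0 := by
      constructor
      · have := hs'.1; have := ht.1; nlinarith [sq_nonneg ρ]
      · exact le_trans ht.2 hs'.2
    have h1 : ρ ^ 2 ≤ 2 / max B 1 := by
      have : ρ ^ 2 ≤ δ ^ 2 := by nlinarith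
      rwa [hδ, Real.sq_sqrt (by positivity)] at this
    have h2 : max B 1 ≤ 2 / ρ ^ 2 := by
      rw [le_div_iff₀ (by positivity)]
      calc max B 1 * ρ ^ 2 ≤ max B 1 * (2 / max B 1) := by
            have : (0:ℝ) < max B 1 := by positivity
            nlinarith
        _ = 2 := by field_simp
    exact le_trans (le_trans (hB t hdom) (le_max_left _ _)) h2
  -- inductive step: the claim at scale ρ/2 implies the claim at scale ρ (for ρ ≤ ε)
  have key : ∀ ρ : ℝ, 0 < ρ → ρ ≤ 1 / (9 * C) → Claim (ρ / 2) → Claim ρ := by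
    intro ρ hρ hρε IH s' hs' hfs'
    have hρ2 : (0:ℝ) < ρ ^ 2 := by positivity
    set A : Set ℝ :=
      {t | t ∈ Set.Icc (s' - ρ ^ 2) s' ∧ ∀ u ∈ Set.Icc t s', f u ≤ 2 / ρ ^ 2} with hA
    have hfs2 : f s' ≤ 2 / ρ ^ 2 := by
      refine le_trans hfs' ?_
      rw [div_le_div_iff₀ hρ2 hρ2]; nlinarith
    have hsA : s' ∈ A := by
      refine ⟨⟨by linarith, le_refl s'⟩, fun u hu => ?_⟩
      have : u = s' := le_antisymm hu.2 hu.1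
      rw [this]; exact hfs2
    have hAne : A.Nonempty := ⟨s', hsA⟩
    have hAbdd : BddBelow A := ⟨s' - ρ ^ 2, fun x hx => hx.1.1⟩
    set t₀ : ℝ := sInf A with ht₀
    have ht₀ge : s' - ρ ^ 2 ≤ t₀ := le_csInf hAne (fun x hx => hx.1.1)
    have ht₀le : t₀ ≤ s' := csInf_le hAbdd hsA
    -- the bound holds strictly above t₀
    have h2 : ∀ u, t₀ < u → u ≤ s' → f u ≤ 2 / ρ ^ 2 := by
      intro u hu1 hu2
      obtain ⟨a, haA, hau⟩ := exists_lt_of_csInf_lt hAne hu1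
      exact haA.2 u ⟨hau.le, hu2⟩
    -- inclusion of the relevant interval in the domain
    have hsub : Set.Icc (s' - ρ ^ 2) s' ⊆ Set.Icc (-(3 / 4) : ℝ) 0 := by
      intro u hu
      constructor
      · have := hs'.1; have := hu.1; nlinarith [sq_nonneg ρ]
      · exact le_trans hu.2 hs'.2
    -- the bound also holds at t₀, by continuity from the right
    have ht₀bdd : f t₀ ≤ 2 / ρ ^ 2 := by
      rcases eq_or_lt_of_le ht₀le with h | h
      · rw [h]; exact hfs2
      · -- t₀ < s'
        have hmem : Set.Icc (-(3 / 4) : ℝ) 0 ∈ nhdsWithin t₀ (Set.Ioi t₀) := by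
          refine Filter.mem_of_superset (Ioc_mem_nhdsGT h) ?_
          intro u hu
          exact hsub ⟨le_trans ht₀ge hu.1.le, hu.2⟩
        have htend : Filter.Tendsto f (nhdsWithin t₀ (Set.Ioi t₀)) (nhds (f t₀)) :=
          (hcont t₀ (hsub ⟨ht₀ge, ht₀le⟩)).tendsto.mono_left (nhdsWithin_le_of_mem hmem)
        refine le_of_tendsto htend ?_
        filter_upwards [Ioc_mem_nhdsGT h] with u hu
        exact h2 u hu.1 hu.2
    have hmain : ∀ u ∈ Set.Icc t₀ s', f u ≤ 2 / ρ ^ 2 := by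
      intro u hu
      rcases eq_or_lt_of_le hu.1 with h | h
      · rw [← h]; exact ht₀bdd
      · exact h2 u h hu.2
    -- derivative bounds on [t₀, s'] from the inductive hypothesis
    have hM : ∀ u ∈ Set.Icc t₀ s',
        DifferentiableAt ℝ f u ∧ |deriv f u| ≤ C / (ρ / 2) ^ 3 := by
      intro u hu
      have hu2 : f u ≤ 1 / (ρ / 2) ^ 2 := by
        refine le_trans (hmain u hu) ?_
        rw [div_le_div_iff₀ hρ2 (by positivity)]
        nlinarith
      have humem : u ∈ Set.Icc (-(1 / 2) + 2 * (ρ / 2) ^ 2 : ℝ) 0 := by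
        constructor
        · have := hs'.1; have := hu.1; nlinarith
        · exact le_trans hu.2 hs'.2
      have h8 := IH u humem hu2
      have := hder (ρ / 2) (by positivity) u humem h8
      exact this u ⟨by nlinarith, le_refl u⟩
    -- the bound at t₀ is in fact strict
    have hstrict : f t₀ < 2 / ρ ^ 2 := by
      rcases eq_or_lt_of_le ht₀le with h | h
      · rw [h]
        calc f s' ≤ 1 / ρ ^ 2 := hfs'
          _ < 2 / ρ ^ 2 := by rw [div_lt_div_iff₀ hρ2 hρ2]; nlinarith
      · have hmvt := Convex.norm_image_sub_le_of_norm_deriv_le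
          (fun x hx => (hM x hx).1) (fun x hx => (hM x hx).2)
          (convex_Icc t₀ s') (Set.right_mem_Icc.mpr ht₀le) (Set.left_mem_Icc.mpr ht₀le)
        rw [Real.norm_eq_abs, Real.norm_eq_abs] at hmvt
        have h1 : f t₀ - f s' ≤ C / (ρ / 2) ^ 3 * (s' - t₀) := by
          have := abs_le.mp hmvt
          have habs : |t₀ - s'| = s' - t₀ := by rw [abs_sub_comm, abs_of_nonneg]; linarith
          rw [habs] at hmvt
          calc f t₀ - f s' ≤ |f t₀ - f s'| := le_abs_self _
            _ ≤ C / (ρ / 2) ^ 3 * (s' - t₀) := hmvt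
        have h3 : C / (ρ / 2) ^ 3 * (s' - t₀) ≤ 8 * C / ρ := by
          have e1 : C / (ρ / 2) ^ 3 = 8 * C / ρ ^ 3 := by
            have h8 : (ρ / 2) ^ 3 = ρ ^ 3 / 8 := by ring
            rw [h8, div_div_eq_mul_div]
            ring
          have hst : s' - t₀ ≤ ρ ^ 2 := by linarith
          calc C / (ρ / 2) ^ 3 * (s' - t₀) = 8 * C / ρ ^ 3 * (s' - t₀) := by rw [e1]
            _ ≤ 8 * C / ρ ^ 3 * ρ ^ 2 :=
                mul_le_mul_of_nonneg_left hst (by positivity)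
            _ = 8 * C / ρ := by field_simp
        have h4 : 8 * C / ρ < 1 / ρ ^ 2 := by
          rw [div_lt_div_iff₀ hρ hρ2]
          have h9 : ρ * (9 * C) ≤ 1 := (le_div_iff₀ (by positivity)).mp hρε
          nlinarith [mul_le_mul_of_nonneg_right h9 hρ.le, mul_pos hC hρ2]
        have := hfs'
        calc f t₀ ≤ f s' + C / (ρ / 2) ^ 3 * (s' - t₀) := by linarith
          _ ≤ 1 / ρ ^ 2 + 8 * C / ρ := by linarith
          _ < 1 / ρ ^ 2 + 1 / ρ ^ 2 := by linarith
          _ = 2 / ρ ^ 2 := by ring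
    -- conclude: t₀ must equal s' - ρ²
    rcases eq_or_lt_of_le ht₀ge with hend | hend
    · intro t ht
      exact hmain t ⟨hend ▸ ht.1, ht.2⟩
    · exfalso
      -- continuity from the left at t₀ lets us go below t₀, contradicting sInf
      have hIooMem : Set.Ioo (s' - ρ ^ 2) s' ∈ nhdsWithin t₀ (Set.Iio t₀) :=
        Ioo_mem_nhdsLT_of_mem ⟨hend, ht₀le⟩
      have hmem : Set.Icc (-(3 / 4) : ℝ) 0 ∈ nhdsWithin t₀ (Set.Iio t₀) := by
        refine Filter.mem_of_superset hIooMem ?_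
        intro u hu
        exact hsub ⟨hu.1.le, hu.2.le⟩
      have htend : Filter.Tendsto f (nhdsWithin t₀ (Set.Iio t₀)) (nhds (f t₀)) :=
        (hcont t₀ (hsub ⟨ht₀ge, ht₀le⟩)).tendsto.mono_left (nhdsWithin_le_of_mem hmem)
      have hev : ∀ᶠ u in nhdsWithin t₀ (Set.Iio t₀),
          f u < 2 / ρ ^ 2 ∧ u ∈ Set.Ioo (s' - ρ ^ 2) s' :=
        (htend.eventually_lt_const hstrict).and hIooMem
      rw [Filter.eventually_iff, mem_nhdsLT_iff_exists_Ioo_subset] at hev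
      obtain ⟨l, hl, hIoo⟩ := hev
      have hlt : l < t₀ := hl
      set t₁ : ℝ := max ((l + t₀) / 2) (s' - ρ ^ 2) with ht₁
      have ht₁lt : t₁ < t₀ := max_lt (by linarith) hend
      have ht₁gt : l < t₁ := lt_of_lt_of_le (by linarith) (le_max_left _ _)
      have ht₁A : t₁ ∈ A := by
        refine ⟨⟨le_max_right _ _, le_trans ht₁lt.le ht₀le⟩, fun u hu => ?_⟩
        rcases lt_trichotomy u t₀ with h | h | h
        · exact (hIoo ⟨lt_of_lt_of_le ht₁gt hu.1, h⟩).1.le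
        · rw [h]; exact hstrict.le
        · exact h2 u h hu.2
      have : t₀ ≤ t₁ := csInf_le hAbdd ht₁A
      linarith
  -- assemble by induction on dyadic scales
  have ind : ∀ n : ℕ, ∀ ρ : ℝ, 0 < ρ → ρ ≤ 1 / (9 * C) → ρ ≤ δ * 2 ^ n → Claim ρ := by
    intro n
    induction n with
    | zero => intro ρ h1 h2 h3; exact base ρ h1 (by simpa using h3)
    | succ n IHn =>
        intro ρ h1 h2 h3
        refine key ρ h1 h2 (IHn (ρ / 2) (by positivity) (by linarith) ?_)
        have : δ * 2 ^ (n + 1) = δ * 2 ^ n * 2 := by rw [pow_succ]; ring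
        linarith
  obtain ⟨n, hn⟩ := pow_unbounded_of_one_lt (r / δ) (one_lt_two (α := ℝ))
  have hrδ : r ≤ δ * 2 ^ n := by
    rw [div_lt_iff₀ hδpos] at hn
    linarith [hn]
  exact ind n r hr hrε hrδ s hs hfs
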